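/- Let Θ(z₁) = f₁(z₁)P₀ + P₁ be operator inner with f₁ a nonconstant inner function, P₁ an orthogonal projection on H²(D^{n-1}) and P₀ = I − P₁, and suppose M = Θ·H²(D^n) is invariant under multiplication by z_i for all i = 2,…,n. Then P₀ z_i P₁ = 0 on H²(D^{n-1}) for each i = 2,…,n; equivalently, the range of P₁ is an invariant subspace of H²(D^{n-1}). -/

import Mathlib

/-!
Common setup: we model the Hardy space `H²(𝔻ⁿ)` via boundary values on the
`n`-torus `Tⁿ = (ℝ/ℤ)ⁿ`: `H²` is the subspace of `L²(Tⁿ)` of functions whose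
Fourier coefficients with some negative index vanish.  `H^∞` functions are
(a.e. classes of) essentially bounded measurable functions with analytic
(nonnegative) Fourier spectrum, identified with their boundary functions `f*`.
Multiplication operators are expressed via a.e. pointwise products.
-/

open MeasureTheory Complex
open scoped ComplexConjugate

noncomputable section

/-- The `n`-torus. -/
abbrev Torus (n : ℕ) := Fin n → AddCircle (1 : ℝ)

/-- `L²(Tⁿ)`. -/
abbrev Lp2 (n : ℕ) := Lp ℂ 2 (volume : Measure (Torus n))

/-- The monomial `z^α` (as a function on the torus). -/
def charFun {n : ℕ} (α : Fin n → ℤ) : Torus n → ℂ := fun x => ∏ i, fourier (α i) (x i)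

lemma charFun_continuous {n : ℕ} (α : Fin n → ℤ) : Continuous (charFun α) :=
  continuous_finset_prod _ fun i _ => (fourier (α i)).continuous.comp (continuous_apply i)

lemma charFun_norm {n : ℕ} (α : Fin n → ℤ) (x : Torus n) : ‖charFun α x‖ = 1 := by
  rw [_root_.charFun, norm_prod]
  simp [Circle.norm_coe]

lemma charFun_memℒp {n : ℕ} (α : Fin n → ℤ) :
    MemLp (charFun α) 2 (volume : Measure (Torus n)) :=
  MemLp.of_bound (charFun_continuous α).aestronglyMeasurable 1
    (Filter.Eventually.of_forall fun x => (charFun_norm α x).le)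

/-- The monomial `z^α` as an element of `L²(Tⁿ)`. -/
def charLp {n : ℕ} (α : Fin n → ℤ) : Lp2 n := (charFun_memℒp α).toLp _

/-- The `α`-th Fourier coefficient of `f ∈ L²(Tⁿ)`. -/
def coeff {n : ℕ} (f : Lp2 n) (α : Fin n → ℤ) : ℂ := inner (𝕜 := ℂ) (charLp α) f

/-- The Hardy space `H²(𝔻ⁿ)` (boundary model): elements of `L²(Tⁿ)` whose Fourier
coefficients vanish off `ℕⁿ`. -/
def H2 (n : ℕ) : Submodule ℂ (Lp2 n) where
  carrier := {f | ∀ α : Fin n → ℤ, (∃ i, α i < 0) → coeff f α = 0}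
  add_mem' := fun {f} {g} hf hg α hα => by
    have h1 := hf α hα; have h2 := hg α hα
    simp only [coeff] at h1 h2 ⊢
    rw [inner_add_right, h1, h2, add_zero]
  zero_mem' := fun α _ => by simp [coeff]
  smul_mem' := fun c {f} hf α hα => by
    have h1 := hf α hα
    simp only [coeff] at h1 ⊢
    rw [inner_smul_right, h1, mul_zero]

/-- `H²(𝔻ⁿ)` as a subset of `L²(Tⁿ)`. -/
def H2set (n : ℕ) : Set (Lp2 n) := (H2 n : Set (Lp2 n))

/-- `φ` is (the boundary function of) an `H^∞(𝔻ⁿ)` function. -/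
structure IsHinf {n : ℕ} (φ : Torus n → ℂ) : Prop where
  memLinf : MemLp φ ⊤ (volume : Measure (Torus n))
  analytic : ∀ α : Fin n → ℤ, (∃ i, α i < 0) →
    ∫ x, conj (charFun α x) * φ x ∂(volume : Measure (Torus n)) = 0

/-- Generalized inner: `φ ∈ H^∞` with `1/φ* ∈ L^∞`, i.e. `|φ*|` essentially bounded below. -/
def IsGenInner {n : ℕ} (φ : Torus n → ℂ) : Prop :=
  IsHinf φ ∧ ∃ c : ℝ, 0 < c ∧ ∀ᵐ x ∂(volume : Measure (Torus n)), c ≤ ‖φ x‖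

/-- Inner: `φ ∈ H^∞` with `|φ*| = 1` a.e. -/
def IsInner {n : ℕ} (φ : Torus n → ℂ) : Prop :=
  IsHinf φ ∧ ∀ᵐ x ∂(volume : Measure (Torus n)), ‖φ x‖ = 1

/-- The image `φ·M` of a set `M ⊆ L²` under multiplication by a function `φ`. -/
def mulSet {n : ℕ} (φ : Torus n → ℂ) (M : Set (Lp2 n)) : Set (Lp2 n) :=
  {g | ∃ f ∈ M, (g : Torus n → ℂ) =ᵐ[(volume : Measure (Torus n))]
      fun x => φ x * (f : Torus n → ℂ) x}

/-- The coordinate function `z_i` on the torus. -/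
def zCoord {n : ℕ} (i : Fin n) : Torus n → ℂ := charFun (Pi.single i 1)

/-- Set-sum `A + B`. -/
def sumSet {n : ℕ} (A B : Set (Lp2 n)) : Set (Lp2 n) := {h | ∃ a ∈ A, ∃ b ∈ B, h = a + b}

/-- Orthogonal difference `A ⊖ B`: elements of `A` orthogonal to `B`. -/
def osub {n : ℕ} (A B : Set (Lp2 n)) : Set (Lp2 n) :=
  {x ∈ A | ∀ y ∈ B, (inner (𝕜 := ℂ) y x : ℂ) = 0}

/-- `M` is a closed subspace of `L²(Tⁿ)` invariant under multiplication by every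
coordinate `z₁, …, zₙ`. -/
structure IsInvariantSubspace {n : ℕ} (M : Set (Lp2 n)) : Prop where
  zero_mem : (0 : Lp2 n) ∈ M
  add_mem : ∀ f g : Lp2 n, f ∈ M → g ∈ M → f + g ∈ M
  smul_mem : ∀ (c : ℂ) (f : Lp2 n), f ∈ M → c • f ∈ M
  closed : IsClosed M
  shift_mem : ∀ i : Fin n, mulSet (zCoord i) M ⊆ M

/-- Lift of a function of `z₁,…,zₙ` to the `(n+1)`-torus (ignoring the last variable). -/
def liftLast {n : ℕ} (φ : Torus n → ℂ) : Torus (n+1) → ℂ := fun x => φ (Fin.init x)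

/-- Lift of a function of `z₂,…,z_{n+1}` to the `(n+1)`-torus (ignoring the first variable). -/
def liftTail {n : ℕ} (φ : Torus n → ℂ) : Torus (n+1) → ℂ := fun x => φ (Fin.tail x)

/-- Lift of a one-variable function to the `(n+1)`-torus via the first variable. -/
def liftFst {n : ℕ} (φ : Torus 1 → ℂ) : Torus (n+1) → ℂ := fun x => φ (fun _ => x 0)

/-- `H²(𝔻ⁿ)` embedded in `L²(T^{n+1})` as the functions independent of the last variable. -/
def H2resLast (n : ℕ) : Set (Lp2 (n+1)) :=
  {F | ∀ α : Fin (n+1) → ℤ, ((∃ i, α i < 0) ∨ α (Fin.last n) ≠ 0) → coeff F α = 0}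

/-- `H²(𝔻ⁿ)` (variables `z₂,…,z_{n+1}`) embedded in `L²(T^{n+1})`:
functions independent of the first variable. -/
def H2resFst (n : ℕ) : Set (Lp2 (n+1)) :=
  {F | ∀ α : Fin (n+1) → ℤ, ((∃ i, α i < 0) ∨ α 0 ≠ 0) → coeff F α = 0}

/-- `H²(𝔻)` in the first variable only, inside `L²(T^{n+1})`. -/
def H2onlyFst (n : ℕ) : Set (Lp2 (n+1)) :=
  {F | ∀ α : Fin (n+1) → ℤ, ((∃ i, α i < 0) ∨ (∃ i, i ≠ 0 ∧ α i ≠ 0)) → coeff F α = 0}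

/-- The `l`-th piece `z_n^l · f_l · H²(𝔻^{n-1})` of a sequence-based subspace
(distinguished variable: the last one). -/
def seqPiece {n : ℕ} (f : ℕ → Torus n → ℂ) (l : ℕ) : Set (Lp2 (n+1)) :=
  mulSet (fun x => charFun (Pi.single (Fin.last n) (l : ℤ)) x * liftLast (f l) x) (H2resLast n)

/-- The sequence-based subspace `⊕_{l≥0} f_l H²(𝔻^{n-1}) z_n^l`, as the closed span of its
(pairwise orthogonal, closed) pieces. -/
def seqM {n : ℕ} (f : ℕ → Torus n → ℂ) : Submodule ℂ (Lp2 (n+1)) :=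
  (Submodule.span ℂ (⋃ l : ℕ, seqPiece f l)).topologicalClosure

/-- Conditions (I) and (II): each `f_l` is generalized inner, and each quotient
`f_l / f_{l+1}` is a generalized inner function (expressed via `f_{l+1} · q = f_l`). -/
def SeqCond {n : ℕ} (f : ℕ → Torus n → ℂ) : Prop :=
  (∀ l, IsGenInner (f l)) ∧
  ∀ l, ∃ q : Torus n → ℂ, IsGenInner q ∧
    (fun x => f (l+1) x * q x) =ᵐ[(volume : Measure (Torus n))] f l

/-- The vector-valued Hardy space `H²(K)` with `K = H²(𝔻ⁿ)`, realized as `ℓ²` of the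
Taylor coefficients. -/
abbrev lpH (n : ℕ) := lp (fun _ : ℕ => H2 n) 2

/-- `G` is the image of `F` under multiplication by the independent variable (the shift). -/
def ShiftRel {K : Type*} [NormedAddCommGroup K] (F G : lp (fun _ : ℕ => K) 2) : Prop :=
  (G : ∀ _ : ℕ, K) 0 = 0 ∧ ∀ m, (G : ∀ _ : ℕ, K) (m + 1) = (F : ∀ _ : ℕ, K) m

/-- The `l`-th Taylor coefficient of a (boundary) function on the circle. -/
def hinfCoeff (φ : Torus 1 → ℂ) (l : ℤ) : ℂ :=
  ∫ x, conj (charFun (fun _ : Fin 1 => l) x) * φ x ∂(volume : Measure (Torus 1))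

/-- Unitary equivalence of (invariant) subspaces `M₁, M₂ ⊆ L²(Tⁿ)`: a surjective linear
isometry `U : M₁ → M₂` intertwining multiplication by every `H^∞` function. -/
def UnitaryEquivalent {n : ℕ} (M₁ M₂ : Set (Lp2 n)) : Prop :=
  ∃ U : Lp2 n → Lp2 n,
    (∀ f ∈ M₁, U f ∈ M₂) ∧
    (∀ g ∈ M₂, ∃ f ∈ M₁, U f = g) ∧
    (∀ f g : Lp2 n, f ∈ M₁ → g ∈ M₁ → U (f + g) = U f + U g) ∧
    (∀ (c : ℂ) (f : Lp2 n), f ∈ M₁ → U (c • f) = c • U f) ∧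
    (∀ f ∈ M₁, ‖U f‖ = ‖f‖) ∧
    (∀ φ : Torus n → ℂ, IsHinf φ → ∀ f ∈ M₁, ∀ g ∈ M₁, ∀ g' : Lp2 n,
      ((g : Torus n → ℂ) =ᵐ[(volume : Measure (Torus n))]
        fun x => φ x * (f : Torus n → ℂ) x) →
      ((g' : Torus n → ℂ) =ᵐ[(volume : Measure (Torus n))]
        fun x => φ x * ((U f : Lp2 n) : Torus n → ℂ) x) →
      U g = g')


instance : IsProbabilityMeasure (volume : Measure (AddCircle (1:ℝ))) := by
  constructor; rw [AddCircle.measure_univ]; norm_num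

lemma aux_norm_coeff0_lt_one (f₁ : Torus 1 → ℂ) (hf₁ : IsInner f₁)
    (hnc : ¬ ∃ c : ℂ, ∀ᵐ x ∂(volume : Measure (Torus 1)), f₁ x = c) :
    ‖hinfCoeff f₁ ((0:ℕ) : ℤ)‖ < 1 := by
  have hInt : Integrable f₁ (volume : Measure (Torus 1)) := hf₁.1.memLinf.integrable le_top
  have hc : hinfCoeff f₁ ((0:ℕ) : ℤ) = ∫ x, f₁ x ∂(volume : Measure (Torus 1)) := by
    unfold hinfCoeff _root_.charFun
    simp [fourier_zero]
  set c : ℂ := ∫ x, f₁ x ∂(volume : Measure (Torus 1)) with hcdef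
  rw [hc]
  have hle : ‖c‖ ≤ 1 := by
    calc ‖c‖ ≤ ∫ x, ‖f₁ x‖ ∂(volume : Measure (Torus 1)) := norm_integral_le_integral_norm _
    _ = ∫ _x, (1:ℝ) ∂(volume : Measure (Torus 1)) :=
        integral_congr_ae (hf₁.2.mono fun x hx => hx)
    _ = 1 := by simp
  rcases lt_or_eq_of_le hle with h | h1
  · exact h
  · exfalso
    have hgInt : Integrable (fun x => 1 - RCLike.re ((starRingEnd ℂ) c * f₁ x))
        (volume : Measure (Torus 1)) :=
      (integrable_const (1:ℝ)).sub (hInt.const_mul _).re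
    have hreInt : ∫ x, RCLike.re ((starRingEnd ℂ) c * f₁ x)
        ∂(volume : Measure (Torus 1)) = 1 := by
      have h0 := integral_re (μ := (volume : Measure (Torus 1)))
        (hInt.const_mul ((starRingEnd ℂ) c))
      rw [h0, integral_const_mul]
      have h2 : (starRingEnd ℂ) c * c = (‖c‖:ℂ)^2 := RCLike.conj_mul c
      rw [h2, h1]
      norm_num
    have hgint : ∫ x, (1 - RCLike.re ((starRingEnd ℂ) c * f₁ x))
        ∂(volume : Measure (Torus 1)) = 0 := by
      rw [integral_sub (integrable_const (1:ℝ)) (hInt.const_mul _).re, hreInt]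
      simp
    have hg0 : 0 ≤ᵐ[(volume : Measure (Torus 1))]
        (fun x => 1 - RCLike.re ((starRingEnd ℂ) c * f₁ x)) := by
      refine hf₁.2.mono fun x hx => ?_
      have h2 : RCLike.re ((starRingEnd ℂ) c * f₁ x) ≤ ‖(starRingEnd ℂ) c * f₁ x‖ :=
        RCLike.re_le_norm _
      have h3 : ‖(starRingEnd ℂ) c * f₁ x‖ = 1 := by
        rw [norm_mul, RCLike.norm_conj, h1, hx]; ring
      simp only [Pi.zero_apply, sub_nonneg]
      rw [h3] at h2; exact h2
    have hgz : (fun x => 1 - RCLike.re ((starRingEnd ℂ) c * f₁ x))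
        =ᵐ[(volume : Measure (Torus 1))] 0 :=
      (integral_eq_zero_iff_of_nonneg_ae hg0 hgInt).mp hgint
    refine hnc ⟨c, ?_⟩
    filter_upwards [hgz, hf₁.2] with x hx1 hx2
    have hre : ((starRingEnd ℂ) c * f₁ x).re = 1 := by
      have h5 : (1:ℝ) - RCLike.re ((starRingEnd ℂ) c * f₁ x) = 0 := hx1
      simp only [RCLike.re_to_complex] at h5
      linarith
    have hnw : ‖(starRingEnd ℂ) c * f₁ x‖ = 1 := by
      rw [norm_mul, RCLike.norm_conj, h1, hx2]; ring
    have him : ((starRingEnd ℂ) c * f₁ x).im = 0 := by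
      set w := (starRingEnd ℂ) c * f₁ x
      have h4 : w.re * w.re + w.im * w.im = 1 := by
        have := Complex.normSq_apply w
        have h5 : Complex.normSq w = 1 := by
          have := Complex.sq_norm w
          rw [hnw] at this
          nlinarith [this]
        nlinarith [Complex.normSq_apply w, h5]
      nlinarith [hre]
    have hw1 : (starRingEnd ℂ) c * f₁ x = 1 := by
      apply Complex.ext <;> simp [hre, him]
    have hcc : c * (starRingEnd ℂ) c = 1 := by
      have := Complex.mul_conj c
      rw [this]
      have : Complex.normSq c = 1 := by
        have := Complex.sq_norm c
        rw [h1] at this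
        nlinarith [this]
      rw [this]; norm_num
    calc f₁ x = (c * (starRingEnd ℂ) c) * f₁ x := by rw [hcc]; ring
    _ = c * ((starRingEnd ℂ) c * f₁ x) := by ring
    _ = c := by rw [hw1]; ring

section AuxLp

variable {K : Type*} [NormedAddCommGroup K]

lemma aux_single_prop (u : K) :
    ((lp.single 2 0 u : lp (fun _ : ℕ => K) 2) : ∀ _ : ℕ, K) 0 = u ∧
      ∀ m, ((lp.single 2 0 u : lp (fun _ : ℕ => K) 2) : ∀ _ : ℕ, K) (m+1) = 0 :=
  ⟨lp.single_apply_self (E := fun _ : ℕ => K) 2 0 u,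
    fun m => lp.single_apply_ne (E := fun _ : ℕ => K) 2 0 u
      (show (m+1 : ℕ) ≠ 0 by omega)⟩

lemma aux_single_norm (y : K) :
    ‖(lp.single 2 0 y : lp (fun _ : ℕ => K) 2)‖ = ‖y‖ :=
  lp.norm_single (E := fun _ : ℕ => K) (p := 2) (by norm_num) 0 y

lemma aux_apply_le (F : lp (fun _ : ℕ => K) 2) : ‖(F : ∀ _ : ℕ, K) 0‖ ≤ ‖F‖ :=
  lp.norm_apply_le_norm (by norm_num) F 0

lemma aux_coord0 [NormedSpace ℂ K]
    (V : lp (fun _ : ℕ => K) 2 →L[ℂ] lp (fun _ : ℕ => K) 2)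
    (hVshift : ∀ F G, ShiftRel F G → ShiftRel (V F) (V G))
    (F' : lp (fun _ : ℕ => K) 2) :
    (V F' : ∀ _ : ℕ, K) 0
      = (V (lp.single 2 0 ((F' : ∀ _ : ℕ, K) 0)) : ∀ _ : ℕ, K) 0 := by
  set x₀ : K := (F' : ∀ _ : ℕ, K) 0 with hx₀
  set C0 : lp (fun _ : ℕ => K) 2 := lp.single 2 0 x₀ with hC0
  set D : lp (fun _ : ℕ => K) 2 := F' - C0 with hD
  have hD0 : (D : ∀ _ : ℕ, K) 0 = 0 := by
    have : (D : ∀ _ : ℕ, K) 0 = (F' : ∀ _ : ℕ, K) 0 - (C0 : ∀ _ : ℕ, K) 0 := rfl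
    rw [this, hC0, lp.single_apply_self (E := fun _ : ℕ => K) 2 0 x₀]
    exact sub_self _
  have hRmem : Memℓp (fun j : ℕ => (D : ∀ _ : ℕ, K) (j+1)) 2 := by
    apply memℓp_gen
    have hs : Summable fun j : ℕ => ‖(D : ∀ _ : ℕ, K) j‖ ^ (2 : ENNReal).toReal :=
      (lp.memℓp D).summable (by norm_num)
    exact hs.comp_injective (add_left_injective 1)
  set R : lp (fun _ : ℕ => K) 2 := ⟨fun j : ℕ => (D : ∀ _ : ℕ, K) (j+1), hRmem⟩ with hR
  have hSR : ShiftRel R D := ⟨hD0, fun m => rfl⟩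
  have hVD0 := (hVshift R D hSR).1
  have hF'split : F' = C0 + D := by rw [hD]; abel
  have h2 : V F' = V C0 + V D := by rw [hF'split, map_add]
  have h3 : (V F' : ∀ _ : ℕ, K) 0
      = (V C0 : ∀ _ : ℕ, K) 0 + (V D : ∀ _ : ℕ, K) 0 := by rw [h2]; rfl
  rw [h3, hVD0, add_zero]

end AuxLp

lemma aux_pyth {K : Type*} [NormedAddCommGroup K] [InnerProductSpace ℂ K]
    (c : ℂ) (hc : ‖c‖ < 1) (a b y : K) (horth : (inner ℂ a b : ℂ) = 0)
    (hy : y = c • a + b) (hle : ‖a + b‖ ≤ ‖y‖) : a = 0 := by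
  have horth2 : (inner ℂ (c • a) b : ℂ) = 0 := by
    rw [inner_smul_left, horth, mul_zero]
  have hy2 : ‖y‖ * ‖y‖ = (‖c‖ * ‖a‖) * (‖c‖ * ‖a‖) + ‖b‖ * ‖b‖ := by
    rw [hy]
    have h := norm_add_sq_eq_norm_sq_add_norm_sq_of_inner_eq_zero (c • a) b horth2
    rw [h, norm_smul]
  have hx02 : ‖a + b‖ * ‖a + b‖ = ‖a‖ * ‖a‖ + ‖b‖ * ‖b‖ :=
    norm_add_sq_eq_norm_sq_add_norm_sq_of_inner_eq_zero a b horth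
  have h8 : ‖a + b‖ * ‖a + b‖ ≤ ‖y‖ * ‖y‖ :=
    mul_self_le_mul_self (norm_nonneg _) hle
  have hs : ‖c‖ * ‖c‖ < 1 := by nlinarith [norm_nonneg c]
  have h9' : ‖a‖ ≤ 0 := by
    by_contra hpos
    push_neg at hpos
    have ht : 0 < ‖a‖ * ‖a‖ := mul_pos hpos hpos
    have hlt : (‖c‖ * ‖a‖) * (‖c‖ * ‖a‖) < ‖a‖ * ‖a‖ := by
      nlinarith [mul_lt_mul_of_pos_right hs ht]
    linarith
  exact norm_eq_zero.mp (le_antisymm h9' (norm_nonneg a))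

set_option maxHeartbeats 2000000 in
/-- if `Θ(z₁) = f₁P₀ + P₁` is operator inner (encoded by the shift-commuting
isometry `V = Θ̂` with the stated coefficient action) with `f₁` nonconstant inner, and
`M = Θ H²(𝔻ⁿ) = ran V` is invariant under multiplication by `z_i` for `i = 2,…,n`, then
`P₀ z_i P₁ = 0`, i.e. the range of `P₁` is an invariant subspace of `H²(𝔻^{n-1})`. -/
theorem stmt_14 (n : ℕ) (f₁ : Torus 1 → ℂ) (hf₁ : IsInner f₁)
    (hnc : ¬ ∃ c : ℂ, ∀ᵐ x ∂(volume : Measure (Torus 1)), f₁ x = c)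
    (P₁ : H2 n →L[ℂ] H2 n) (hidem : ∀ x : H2 n, P₁ (P₁ x) = P₁ x)
    (hsa : ∀ x y : H2 n, (inner (𝕜 := ℂ) (P₁ x) y : ℂ) = inner ℂ x (P₁ y))
    (V : lpH n →L[ℂ] lpH n) (hViso : ∀ F, ‖V F‖ = ‖F‖)
    (hVshift : ∀ F G, ShiftRel F G → ShiftRel (V F) (V G))
    (hVcoeff : ∀ (x : H2 n) (F : lpH n),
      ((F : ∀ _ : ℕ, H2 n) 0 = x ∧ ∀ m, (F : ∀ _ : ℕ, H2 n) (m+1) = 0) →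
      ∀ l : ℕ, (V F : ∀ _ : ℕ, H2 n) l
        = hinfCoeff f₁ (l : ℤ) • (x - P₁ x) + (if l = 0 then P₁ x else 0))
    (hinv : ∀ i : Fin n, ∀ F ∈ Set.range V, ∀ G : lpH n,
      (∀ m : ℕ, ((((G : ∀ _ : ℕ, H2 n) m : H2 n) : Lp2 n) : Torus n → ℂ)
          =ᵐ[(volume : Measure (Torus n))]
        fun x => zCoord i x * ((((F : ∀ _ : ℕ, H2 n) m : H2 n) : Lp2 n) : Torus n → ℂ) x)
        → G ∈ Set.range V) :
    ∀ i : Fin n, ∀ x y : H2 n,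
      ((y : Lp2 n) : Torus n → ℂ) =ᵐ[(volume : Measure (Torus n))]
        (fun t => zCoord i t * ((P₁ x : Lp2 n) : Torus n → ℂ) t) →
      P₁ y = y := by
  intro i x y hy
  classical
  have hclt : ‖hinfCoeff f₁ ((0:ℕ) : ℤ)‖ < 1 := aux_norm_coeff0_lt_one f₁ hf₁ hnc
  set u : H2 n := P₁ x with hu
  set F₀ : lpH n := lp.single 2 0 u with hF₀def
  have hF₀prop := aux_single_prop (K := H2 n) u
  have hP₁u : P₁ u = u := hidem x
  have hVF₀ : V F₀ = F₀ := by
    apply lp.ext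
    funext l
    rw [hVcoeff u F₀ hF₀prop l, hP₁u, sub_self, smul_zero, zero_add]
    cases l with
    | zero => exact hF₀prop.1.symm
    | succ m => exact (hF₀prop.2 m).symm
  set G : lpH n := lp.single 2 0 y with hGdef
  have hGprop := aux_single_prop (K := H2 n) y
  have hGmem : G ∈ Set.range V := by
    refine hinv i F₀ ⟨F₀, hVF₀⟩ G ?_
    intro m
    cases m with
    | zero =>
      rw [hGprop.1, hF₀prop.1]
      exact hy
    | succ m =>
      rw [hGprop.2 m, hF₀prop.2 m]
      have h0 : (((0 : H2 n) : Lp2 n) : Torus n → ℂ)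
          =ᵐ[(volume : Measure (Torus n))] 0 := by
        rw [ZeroMemClass.coe_zero]
        exact Lp.coeFn_zero ℂ 2 _
      filter_upwards [h0] with t ht
      rw [ht]
      simp [ht]
  obtain ⟨F', hF'⟩ := hGmem
  set x₀ : H2 n := (F' : ∀ _ : ℕ, H2 n) 0 with hx₀
  have hC0prop := aux_single_prop (K := H2 n) x₀
  have hcoord := aux_coord0 (K := H2 n) V hVshift F'
  have hVC0 : (V (lp.single 2 0 x₀) : ∀ _ : ℕ, H2 n) 0
      = hinfCoeff f₁ ((0:ℕ) : ℤ) • (x₀ - P₁ x₀) + P₁ x₀ := by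
    rw [hVcoeff x₀ (lp.single 2 0 x₀) hC0prop 0]
    simp
  have hycoord : y = hinfCoeff f₁ ((0:ℕ) : ℤ) • (x₀ - P₁ x₀) + P₁ x₀ := by
    rw [← hVC0, ← hcoord, hF', hGprop.1]
  have horth : (inner ℂ (x₀ - P₁ x₀) (P₁ x₀) : ℂ) = 0 := by
    rw [inner_sub_left]
    have h4 : (inner ℂ (P₁ x₀) (P₁ x₀) : ℂ) = inner ℂ x₀ (P₁ x₀) := by
      rw [hsa x₀ (P₁ x₀), hidem x₀]
    rw [h4, sub_self]
  have hab : (x₀ - P₁ x₀) + P₁ x₀ = x₀ := by abel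
  have hnormle : ‖(x₀ - P₁ x₀) + P₁ x₀‖ ≤ ‖y‖ := by
    rw [hab]
    have h5 : ‖x₀‖ ≤ ‖F'‖ := aux_apply_le (K := H2 n) F'
    have h6 : ‖F'‖ = ‖G‖ := by rw [← hF', hViso]
    have h7 : ‖G‖ = ‖y‖ := by rw [hGdef]; exact aux_single_norm (K := H2 n) y
    rw [h6, h7] at h5
    exact h5
  have ha0 : x₀ - P₁ x₀ = 0 :=
    aux_pyth (hinfCoeff f₁ ((0:ℕ) : ℤ)) hclt (x₀ - P₁ x₀) (P₁ x₀) y horth hycoord hnormle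
  have hyb : y = P₁ x₀ := by rw [hycoord, ha0, smul_zero, zero_add]
  rw [hyb]
  exact hidem x₀

end
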